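/- arXiv:2505.22894 — 2 statements merged into one kernel-verified Lean document; each statement's English description precedes it below -/
import Mathlib

section
/- Let G be a graph containing d pairwise vertex-disjoint connected subgraphs G_1, ..., G_d, each of which has (Δ-1)-treewidth at least d-1. Then the Δ-treewidth of G is at least d-1. -/
/-- A rooted tree-decomposition of a graph `H`: nodes are `Fin n`, with a root and a
parent function (the root is its own parent, every node reaches the root by iterating
the parent). Bags satisfy edge coverage and, for each vertex, the bags containing it
form a (connected) subtree; vertex coverage is included in the subtree condition. -/
structure TreeDecomp (V : Type) [Fintype V] [DecidableEq V] (H : SimpleGraph V) where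
  n : ℕ
  npos : 0 < n
  root : Fin n
  parent : Fin n → Fin n
  parent_root : parent root = root
  reaches : ∀ t, ∃ k, parent^[k] t = root
  bag : Fin n → Finset V
  edge_cover : ∀ u v : V, H.Adj u v → ∃ t, u ∈ bag t ∧ v ∈ bag t
  subtree : ∀ v : V, ∃ r, v ∈ bag r ∧
      ∀ t, v ∈ bag t → ∃ k, parent^[k] t = r ∧ ∀ j ≤ k, v ∈ bag (parent^[j] t)

namespace TreeDecomp

variable {V : Type} [Fintype V] [DecidableEq V] {H : SimpleGraph V}

/-- The width of a tree-decomposition: maximum bag size minus one. -/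
def width (D : TreeDecomp V H) : ℕ :=
  (Finset.univ.sup fun t => (D.bag t).card) - 1

/-- The tree has height at most `Δ`: every node reaches the root in fewer than `Δ`
parent steps (so every root-to-leaf path has at most `Δ` vertices). -/
def HeightLE (D : TreeDecomp V H) (Δ : ℕ) : Prop :=
  ∀ t, ∃ k < Δ, D.parent^[k] t = D.root

end TreeDecomp

/-- `Δ`-treewidth: minimum width over tree-decompositions of height at most `Δ`
(`⊤` if none exists). -/
noncomputable def twD {V : Type} [Fintype V] [DecidableEq V] (Δ : ℕ) (H : SimpleGraph V) : ℕ∞ :=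
  sInf {w : ℕ∞ | ∃ D : TreeDecomp V H, D.HeightLE Δ ∧ (D.width : ℕ∞) = w}

namespace TreeDecomp

variable {V : Type} [Fintype V] [DecidableEq V] {H : SimpleGraph V} (D : TreeDecomp V H)

noncomputable def depth (t : Fin D.n) : ℕ := Nat.find (D.reaches t)

lemma depth_spec (t : Fin D.n) : D.parent^[D.depth t] t = D.root := Nat.find_spec (D.reaches t)

lemma depth_min {t : Fin D.n} {k : ℕ} (h : D.parent^[k] t = D.root) : D.depth t ≤ k :=
  Nat.find_min' _ h

lemma iterate_root (k : ℕ) : D.parent^[k] D.root = D.root :=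
  Function.iterate_fixed D.parent_root k

lemma iterate_depth_le {t : Fin D.n} {k : ℕ} (h : D.depth t ≤ k) :
    D.parent^[k] t = D.root := by
  have h2 : D.parent^[(k - D.depth t) + D.depth t] t = D.root := by
    rw [Function.iterate_add_apply, D.depth_spec, D.iterate_root]
  rwa [Nat.sub_add_cancel h] at h2

lemma depth_eq_zero {t : Fin D.n} (h : D.depth t = 0) : t = D.root := by
  have h2 := D.depth_spec t
  rwa [h, Function.iterate_zero_apply] at h2

lemma depth_iterate_le {t : Fin D.n} {a : ℕ} (h : a ≤ D.depth t) :
    D.depth (D.parent^[a] t) ≤ D.depth t - a := by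
  apply depth_min
  rw [← Function.iterate_add_apply, Nat.sub_add_cancel h]
  exact D.depth_spec t

lemma anc_comparable {t x y : Fin D.n} {a b : ℕ} (hx : D.parent^[a] t = x)
    (hy : D.parent^[b] t = y) (hab : a ≤ b) : D.parent^[b - a] x = y := by
  subst hx; subst hy
  rw [← Function.iterate_add_apply]
  congr 1
  omega

lemma depth_root : D.depth D.root = 0 :=
  Nat.le_zero.mp (D.depth_min (by simp))

lemma cycle_eq {x y : Fin D.n} {a b : ℕ} (h1 : D.parent^[a] x = y)
    (h2 : D.parent^[b] y = x) : x = y := by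
  by_cases hx0 : D.depth x = 0
  · have hx := D.depth_eq_zero hx0
    subst hx
    rw [D.iterate_root] at h1
    exact h1
  by_cases hy0 : D.depth y = 0
  · have hy := D.depth_eq_zero hy0
    subst hy
    rw [D.iterate_root] at h2
    exact h2.symm
  by_cases ha0 : a = 0
  · subst ha0; simpa using h1
  have hax : a ≤ D.depth x := by
    by_contra hgt
    push_neg at hgt
    have h3 := D.iterate_depth_le hgt.le
    rw [h1] at h3
    exact hy0 (by rw [h3, D.depth_root])
  have hbx : b ≤ D.depth y := by
    by_contra hgt
    push_neg at hgt
    have h3 := D.iterate_depth_le hgt.le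
    rw [h2] at h3
    exact hx0 (by rw [h3, D.depth_root])
  have d1 : D.depth y ≤ D.depth x - a := h1 ▸ D.depth_iterate_le hax
  have d2 : D.depth x ≤ D.depth y - b := h2 ▸ D.depth_iterate_le hbx
  exfalso
  omega

noncomputable def hub (v : V) : Fin D.n := (D.subtree v).choose

lemma hub_mem (v : V) : v ∈ D.bag (D.hub v) := (D.subtree v).choose_spec.1

lemma hub_prop (v : V) : ∀ t, v ∈ D.bag t → ∃ k, D.parent^[k] t = D.hub v ∧
    ∀ j ≤ k, v ∈ D.bag (D.parent^[j] t) := (D.subtree v).choose_spec.2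

end TreeDecomp

open scoped Classical in
/-- if G contains d pairwise vertex-disjoint connected subgraphs, each of
(Δ-1)-treewidth at least d-1, then the Δ-treewidth of G is at least d-1. -/
theorem twD_lower_bound_of_disjoint_subgraphs (V : Type) [Fintype V] [DecidableEq V]
    (H : SimpleGraph V) (d Δ : ℕ) (hd : 0 < d) (hΔ : 0 < Δ)
    (G : Fin d → H.Subgraph)
    (hdisj : ∀ i j, i ≠ j → Disjoint (G i).verts (G j).verts)
    (hconn : ∀ i, (G i).Connected)
    (htw : ∀ i, ((d - 1 : ℕ) : ℕ∞) ≤ twD (Δ - 1) (G i).coe) :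
    ((d - 1 : ℕ) : ℕ∞) ≤ twD Δ H := by
  by_contra hlt
  push_neg at hlt
  obtain ⟨w, ⟨D, hH, rfl⟩, hwlt⟩ := sInf_lt_iff.mp hlt
  have hwidth : D.width < d - 1 := by exact_mod_cast hwlt
  have hsup : ∀ t, (D.bag t).card < d := by
    intro t
    have h1 : (D.bag t).card ≤ Finset.univ.sup (fun t => (D.bag t).card) :=
      Finset.le_sup (f := fun t => (D.bag t).card) (Finset.mem_univ t)
    have h2 := hwidth
    unfold TreeDecomp.width at h2
    omega
  have hdepth : ∀ t, D.depth t < Δ := by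
    intro t
    obtain ⟨k, hk, hr⟩ := hH t
    exact lt_of_le_of_lt (D.depth_min hr) hk
  -- find a subgraph avoiding the root bag
  have hfree : ∃ i, ∀ v ∈ (G i).verts, v ∉ D.bag D.root := by
    by_contra hall
    push_neg at hall
    choose f hf1 hf2 using hall
    have hinj : Function.Injective f := by
      intro i j hij
      by_contra hne
      exact (Set.disjoint_left.mp (hdisj i j hne) (hf1 i)) (hij ▸ hf1 j)
    have hcard : d ≤ (D.bag D.root).card := by
      have := Finset.card_le_card_of_injOn (s := Finset.univ) (t := D.bag D.root) f
        (fun i _ => hf2 i) hinj.injOn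
      simpa using this
    have := hsup D.root
    omega
  obtain ⟨i, hi⟩ := hfree
  have hne : Nonempty ↥(G i).verts := (hconn i).nonempty.to_subtype
  obtain ⟨m, -, hmin⟩ := Finset.exists_min_image (Finset.univ : Finset ↥(G i).verts)
    (fun v => D.depth (D.hub v.1)) Finset.univ_nonempty
  set r := D.hub m.1 with hr_def
  have hrmem : (m : V) ∈ D.bag r := D.hub_mem _
  have hrne : r ≠ D.root := fun h => hi m.1 m.2 (h ▸ hrmem)
  have hrdepth : 1 ≤ D.depth r := by
    rcases Nat.eq_zero_or_pos (D.depth r) with h | h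
    · exact absurd (D.depth_eq_zero h) hrne
    · exact h
  -- every hub of a vertex of G i is a descendant of r
  have step : ∀ a b : ↥(G i).verts, ((G i).coe.Adj a b) →
      (∃ c, D.parent^[c] (D.hub a.1) = r) → ∃ c, D.parent^[c] (D.hub b.1) = r := by
    intro a b hab ⟨c, hc⟩
    have hadj : H.Adj a.1 b.1 := (G i).adj_sub hab
    obtain ⟨t, ha, hb⟩ := D.edge_cover _ _ hadj
    obtain ⟨k₁, hk₁, -⟩ := D.hub_prop a.1 t ha
    obtain ⟨k₂, hk₂, -⟩ := D.hub_prop b.1 t hb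
    rcases le_or_gt k₂ k₁ with h | h
    · have h1 : D.parent^[k₁ - k₂] (D.hub b.1) = D.hub a.1 := D.anc_comparable hk₂ hk₁ h
      refine ⟨c + (k₁ - k₂), ?_⟩
      rw [Function.iterate_add_apply, h1, hc]
    · have h1 : D.parent^[k₂ - k₁] (D.hub a.1) = D.hub b.1 := D.anc_comparable hk₁ hk₂ h.le
      rcases le_or_gt (k₂ - k₁) c with h2 | h2
      · refine ⟨c - (k₂ - k₁), ?_⟩
        exact D.anc_comparable h1 hc h2
      · -- r is a strict ancestor-of-hub-a below hub b
        have h3 : D.parent^[(k₂ - k₁) - c] r = D.hub b.1 := D.anc_comparable hc h1 h2.le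
        have hminb : D.depth r ≤ D.depth (D.hub b.1) := hmin b (Finset.mem_univ b)
        rcases le_or_gt ((k₂ - k₁) - c) (D.depth r) with h4 | h4
        · have h5 : D.depth (D.hub b.1) ≤ D.depth r - ((k₂ - k₁) - c) :=
            h3 ▸ D.depth_iterate_le h4
          have : (k₂ - k₁) - c = 0 := by omega
          refine ⟨0, ?_⟩
          rw [Function.iterate_zero_apply]
          rw [this, Function.iterate_zero_apply] at h3
          exact h3.symm
        · have h5 : D.parent^[(k₂ - k₁) - c] r = D.root := D.iterate_depth_le h4.le
          have h6 : D.hub b.1 = D.root := by rw [← h3, h5]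
          have h7 : D.depth r = 0 := by
            have := h6 ▸ hminb
            rw [D.depth_root] at this
            omega
          refine ⟨0, ?_⟩
          rw [Function.iterate_zero_apply, h6, D.depth_eq_zero h7]
  have key : ∀ v : ↥(G i).verts, ∃ c, D.parent^[c] (D.hub v.1) = r := by
    have walkind : ∀ (u v : ↥(G i).verts) (_ : ((G i).coe).Walk u v),
        (∃ c, D.parent^[c] (D.hub u.1) = r) → ∃ c, D.parent^[c] (D.hub v.1) = r := by
      intro u v w
      induction w with
      | nil => exact id
      | cons h p ih => exact fun hu => ih (step _ _ h hu)
    intro v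
    obtain ⟨w⟩ := (hconn i).preconnected m v
    exact walkind m v w ⟨0, rfl⟩
  -- descendants of r
  set P : Fin D.n → Prop := fun t => ∃ k, D.parent^[k] t = r with hP_def
  have hPr : P r := ⟨0, rfl⟩
  have hdesc : ∀ (t : Fin D.n) (v : V), v ∈ (G i).verts → v ∈ D.bag t → P t := by
    intro t v hv hvb
    obtain ⟨k₁, hk₁, -⟩ := D.hub_prop v t hvb
    obtain ⟨c, hc⟩ := key ⟨v, hv⟩
    exact ⟨c + k₁, by rw [Function.iterate_add_apply, hk₁]; exact hc⟩
  set n' := Fintype.card {t : Fin D.n // P t} with hn'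
  set e : {t : Fin D.n // P t} ≃ Fin n' := Fintype.equivFin _ with he
  set pa : Fin D.n → Fin D.n := fun t => if t = r then r else D.parent t with hpa
  have hPpa : ∀ t, P t → P (pa t) := by
    intro t ⟨k, hk⟩
    by_cases h : t = r
    · simp only [hpa, h, if_pos rfl]; exact hPr
    · simp only [hpa, if_neg h]
      have hk0 : k ≠ 0 := by
        intro h0
        rw [h0, Function.iterate_zero_apply] at hk
        exact h hk
      refine ⟨k - 1, ?_⟩
      have h2 : D.parent^[(k - 1) + 1] t = r := by
        rw [Nat.sub_add_cancel (Nat.one_le_iff_ne_zero.mpr hk0)]; exact hk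
      rwa [Function.iterate_succ_apply] at h2
  set f : {t : Fin D.n // P t} → {t : Fin D.n // P t} := fun x => ⟨pa x.1, hPpa x.1 x.2⟩ with hf
  set pr : Fin n' → Fin n' := fun j => e (f (e.symm j)) with hpr
  have hconj : ∀ (k : ℕ) (j : Fin n'), pr^[k] j = e (f^[k] (e.symm j)) := by
    intro k
    induction k with
    | zero => simp
    | succ k ih =>
      intro j
      rw [Function.iterate_succ_apply', ih, Function.iterate_succ_apply']
      simp [hpr]
  have hfval : ∀ (k : ℕ) (x : {t : Fin D.n // P t}), (f^[k] x).1 = pa^[k] x.1 := by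
    intro k
    induction k with
    | zero => simp
    | succ k ih =>
      intro x
      rw [Function.iterate_succ_apply', Function.iterate_succ_apply']
      show pa (f^[k] x).1 = pa (pa^[k] x.1)
      rw [ih]
  have hpa_eq : ∀ (t : Fin D.n) (m' : ℕ), (∀ j < m', D.parent^[j] t ≠ r) →
      ∀ j ≤ m', pa^[j] t = D.parent^[j] t := by
    intro t m' hnr j hj
    induction j with
    | zero => simp
    | succ j ih =>
      rw [Function.iterate_succ_apply', Function.iterate_succ_apply', ih (by omega)]
      have h1 : D.parent^[j] t ≠ r := hnr j (by omega)
      simp only [hpa, if_neg h1]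
  have hreach : ∀ j : Fin n', ∃ a, a < Δ - 1 ∧ pr^[a] j = e ⟨r, hPr⟩ := by
    intro j
    have hPt : P (e.symm j).1 := (e.symm j).2
    have ha : D.parent^[Nat.find hPt] (e.symm j).1 = r := Nat.find_spec hPt
    set a := Nat.find hPt with ha_def
    have hminA : ∀ l < a, D.parent^[l] (e.symm j).1 ≠ r := fun l hl => Nat.find_min hPt hl
    have hval : (f^[a] (e.symm j)).1 = r := by
      rw [hfval, hpa_eq _ a hminA a le_rfl]; exact ha
    refine ⟨a, ?_, by rw [hconj]; congr 1; exact Subtype.ext hval⟩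
    have h1 : a ≤ D.depth (e.symm j).1 := by
      by_contra hgt
      push_neg at hgt
      have h2 := D.iterate_depth_le hgt.le
      exact hrne (by rw [← ha, h2])
    have h2 : D.depth r ≤ D.depth (e.symm j).1 - a := ha ▸ D.depth_iterate_le h1
    have h3 := hdepth (e.symm j).1
    omega
  set D' : TreeDecomp ↥(G i).verts (G i).coe :=
    { n := n'
      npos := Fintype.card_pos_iff.mpr ⟨⟨r, hPr⟩⟩
      root := e ⟨r, hPr⟩
      parent := pr
      parent_root := by
        show e (f (e.symm (e ⟨r, hPr⟩))) = e ⟨r, hPr⟩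
        rw [e.symm_apply_apply]
        congr 1
        exact Subtype.ext (by simp [hf, hpa])
      reaches := fun j => ⟨(hreach j).choose, (hreach j).choose_spec.2⟩
      bag := fun j => Finset.univ.filter (fun v : ↥(G i).verts => v.1 ∈ D.bag (e.symm j).1)
      edge_cover := by
        intro u v huv
        have hadj : H.Adj u.1 v.1 := (G i).adj_sub huv
        obtain ⟨t, hu, hv⟩ := D.edge_cover _ _ hadj
        have hPt : P t := hdesc t u.1 u.2 hu
        refine ⟨e ⟨t, hPt⟩, ?_, ?_⟩
        · exact Finset.mem_filter.mpr ⟨Finset.mem_univ _, by rw [e.symm_apply_apply]; exact hu⟩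
        · exact Finset.mem_filter.mpr ⟨Finset.mem_univ _, by rw [e.symm_apply_apply]; exact hv⟩
      subtree := by
        intro v
        have hPh : P (D.hub v.1) := key v
        refine ⟨e ⟨D.hub v.1, hPh⟩,
          Finset.mem_filter.mpr ⟨Finset.mem_univ _,
            by rw [e.symm_apply_apply]; exact D.hub_mem v.1⟩, ?_⟩
        intro t' hvt'
        have hvb : v.1 ∈ D.bag (e.symm t').1 := (Finset.mem_filter.mp hvt').2
        obtain ⟨k, hk, hbags⟩ := D.hub_prop v.1 (e.symm t').1 hvb
        have hex : ∃ l, D.parent^[l] (e.symm t').1 = D.hub v.1 := ⟨k, hk⟩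
        have hk₀ : D.parent^[Nat.find hex] (e.symm t').1 = D.hub v.1 := Nat.find_spec hex
        set k₀ := Nat.find hex with hk₀_def
        have hk₀le : k₀ ≤ k := Nat.find_min' hex hk
        have hnotr : ∀ l < k₀, D.parent^[l] (e.symm t').1 ≠ r := by
          intro l hl hlr
          have h1 : D.parent^[k₀ - l] r = D.hub v.1 := D.anc_comparable hlr hk₀ hl.le
          obtain ⟨c, hc⟩ := hPh
          have h2 : r = D.hub v.1 := D.cycle_eq h1 hc
          exact Nat.find_min hex hl (by rw [hlr]; exact h2)
        have hPj : ∀ l ≤ k₀, P (D.parent^[l] (e.symm t').1) := by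
          intro l hl
          obtain ⟨c, hc⟩ := hPh
          refine ⟨c + (k₀ - l), ?_⟩
          rw [Function.iterate_add_apply, ← Function.iterate_add_apply D.parent (k₀ - l) l,
            Nat.sub_add_cancel hl, hk₀]
          exact hc
        have hpath : ∀ l (hl : l ≤ k₀), pr^[l] t' = e ⟨D.parent^[l] (e.symm t').1, hPj l hl⟩ := by
          intro l hl
          rw [hconj]
          congr 1
          exact Subtype.ext (by rw [hfval]; exact hpa_eq _ k₀ hnotr l hl)
        refine ⟨k₀, ?_, ?_⟩
        · rw [hpath k₀ le_rfl]
          congr 1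
          exact Subtype.ext hk₀
        · intro l hl
          rw [hpath l hl]
          exact Finset.mem_filter.mpr ⟨Finset.mem_univ _,
            by rw [e.symm_apply_apply]; exact hbags l (le_trans hl hk₀le)⟩ } with hD'
  have hheight : D'.HeightLE (Δ - 1) := fun j =>
    ⟨(hreach j).choose, (hreach j).choose_spec.1, (hreach j).choose_spec.2⟩
  have hD'w : D'.width ≤ D.width := by
    unfold TreeDecomp.width
    apply Nat.sub_le_sub_right
    apply Finset.sup_le
    intro j _
    calc (D'.bag j).card ≤ (D.bag (e.symm j).1).card := by
          apply Finset.card_le_card_of_injOn (fun v => v.1)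
          · intro v hv
            exact (Finset.mem_filter.mp hv).2
          · exact Subtype.val_injective.injOn
      _ ≤ Finset.univ.sup (fun t => (D.bag t).card) :=
          Finset.le_sup (f := fun t => (D.bag t).card) (Finset.mem_univ _)
  have hle : twD (Δ - 1) (G i).coe ≤ (D'.width : ℕ∞) := sInf_le ⟨D', hheight, rfl⟩
  have hfin : ((d - 1 : ℕ) : ℕ∞) ≤ (D.width : ℕ∞) :=
    le_trans (le_trans (htw i) hle) (by exact_mod_cast hD'w)
  have : (d - 1 : ℕ) ≤ D.width := by exact_mod_cast hfin
  omega
end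

section
/- For all positive integers Δ ≥ 2 and d, the full d-ary tree T_Δ of height Δ satisfies tw_{Δ-1}(T_Δ) ≥ d - 1. -/
/-- The full d-ary tree of height Δ: vertices are pairs of a depth k < Δ and a
sequence of k child-indices; edges join each node to its one-step extensions. -/
def fullDAryTree (d Δ : ℕ) : SimpleGraph (Σ k : Fin Δ, Fin (k : ℕ) → Fin d) :=
  SimpleGraph.fromRel (fun x y =>
    ∃ h : (x.1 : ℕ) + 1 = (y.1 : ℕ),
      ∀ i : Fin (x.1 : ℕ), y.2 (Fin.castLE (by omega) i) = x.2 i)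

namespace TDAux

variable {V : Type} [Fintype V] [DecidableEq V] {H : SimpleGraph V}

noncomputable def depth (D : TreeDecomp V H) (t : Fin D.n) : ℕ := Nat.find (D.reaches t)

lemma depth_spec (D : TreeDecomp V H) (t : Fin D.n) :
    D.parent^[depth D t] t = D.root := Nat.find_spec (D.reaches t)

lemma depth_le (D : TreeDecomp V H) {t : Fin D.n} {k : ℕ} (h : D.parent^[k] t = D.root) :
    depth D t ≤ k := Nat.find_le h

lemma iterate_root (D : TreeDecomp V H) (k : ℕ) : D.parent^[k] D.root = D.root := by
  induction k with
  | zero => rfl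
  | succ n ih => rw [Function.iterate_succ_apply', ih, D.parent_root]

lemma depth_lt (D : TreeDecomp V H) {s x : Fin D.n} {j : ℕ} (hj : 1 ≤ j)
    (hx : D.parent^[j] s = x) (hne : x ≠ s) : depth D x < depth D s := by
  by_cases h : j ≤ depth D s
  · have h1 : D.parent^[depth D s - j] x = D.root := by
      rw [← hx, ← Function.iterate_add_apply, Nat.sub_add_cancel h]
      exact depth_spec D s
    have := depth_le D h1
    omega
  · have hx0 : x = D.root := by
      rw [← hx, show j = (j - depth D s) + depth D s by omega, Function.iterate_add_apply,
        depth_spec D s, iterate_root]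
    have hs : s ≠ D.root := fun h' => hne (by rw [hx0, h'])
    have hdx : depth D x = 0 := by
      have : D.parent^[0] x = D.root := hx0
      have := depth_le D this; omega
    have hds : 0 < depth D s := by
      rcases Nat.eq_zero_or_pos (depth D s) with h0 | h0
      · exact absurd (by have := depth_spec D s; rwa [h0] at this) hs
      · exact h0
    omega

noncomputable def rtop (D : TreeDecomp V H) (v : V) : Fin D.n := (D.subtree v).choose

lemma mem_rtop (D : TreeDecomp V H) (v : V) : v ∈ D.bag (rtop D v) :=
  (D.subtree v).choose_spec.1

lemma rtop_spec (D : TreeDecomp V H) (v : V) :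
    ∀ t, v ∈ D.bag t → ∃ k, D.parent^[k] t = rtop D v ∧
      ∀ j ≤ k, v ∈ D.bag (D.parent^[j] t) :=
  (D.subtree v).choose_spec.2

/-- dichotomy: for an edge uv, either v lies in the top bag of u,
or the top bag of v is strictly deeper than that of u. -/
lemma child_dichotomy (D : TreeDecomp V H) {u v : V} (h : H.Adj u v) :
    v ∈ D.bag (rtop D u) ∨ depth D (rtop D u) < depth D (rtop D v) := by
  obtain ⟨B, hu, hv⟩ := D.edge_cover u v h
  obtain ⟨k, hk, -⟩ := rtop_spec D u B hu
  obtain ⟨m, hm, hpath⟩ := rtop_spec D v B hv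
  by_cases hkm : k ≤ m
  · left; rw [← hk]; exact hpath k hkm
  · by_cases heq : rtop D u = rtop D v
    · left; rw [heq]; exact mem_rtop D v
    · right
      have key : D.parent^[k - m] (rtop D v) = rtop D u := by
        rw [← hm, ← Function.iterate_add_apply, show k - m + m = k by omega, hk]
      exact depth_lt D (by omega) key heq

end TDAux

/-- for Δ ≥ 2, the full d-ary tree of height Δ has
(Δ-1)-treewidth at least d - 1. -/
theorem twD_fullDAryTree_lb (d Δ : ℕ) (hd : 0 < d) (hΔ : 2 ≤ Δ) :
    ((d - 1 : ℕ) : ℕ∞) ≤ twD (Δ - 1) (fullDAryTree d Δ) := by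
  apply le_sInf
  rintro w ⟨D, hH, rfl⟩
  have hsup : d ≤ Finset.univ.sup fun t => (D.bag t).card := by
    by_contra hcon
    push_neg at hcon
    have hbag : ∀ t, (D.bag t).card < d := fun t =>
      lt_of_le_of_lt (Finset.le_sup (f := fun t => (D.bag t).card) (Finset.mem_univ t)) hcon
    have main : ∀ i, ∀ hi : i < Δ, ∃ f : Fin i → Fin d,
        i ≤ TDAux.depth D (TDAux.rtop D ⟨⟨i, hi⟩, f⟩) := by
      intro i
      induction i with
      | zero => intro hi; exact ⟨Fin.elim0, Nat.zero_le _⟩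
      | succ i ih =>
        intro hi
        obtain ⟨f, hf⟩ := ih (by omega)
        set v : (Σ k : Fin Δ, Fin (k : ℕ) → Fin d) := ⟨⟨i, by omega⟩, f⟩ with hv
        set c : Fin d → (Σ k : Fin Δ, Fin (k : ℕ) → Fin d) :=
          fun a => ⟨⟨i + 1, hi⟩, Fin.snoc f a⟩ with hc
        by_cases hall : ∀ a : Fin d, c a ∈ D.bag (TDAux.rtop D v)
        · exfalso
          have hinj : Function.Injective c := by
            intro a b hab
            have h2 : HEq ((c a).2) ((c b).2) := by rw [hab]
            have h3 : (Fin.snoc f a : Fin (i+1) → Fin d) = Fin.snoc f b := eq_of_heq h2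
            have := congrFun h3 (Fin.last i)
            simpa [Fin.snoc_last] using this
          have hsub : insert v (Finset.image c Finset.univ) ⊆ D.bag (TDAux.rtop D v) := by
            intro x hx
            rcases Finset.mem_insert.mp hx with rfl | hx
            · exact TDAux.mem_rtop D v
            · obtain ⟨a, -, rfl⟩ := Finset.mem_image.mp hx
              exact hall a
          have hvnot : v ∉ Finset.image c Finset.univ := by
            intro hx
            obtain ⟨a, -, ha⟩ := Finset.mem_image.mp hx
            have : ((c a).1 : ℕ) = (v.1 : ℕ) := by rw [ha]
            simp [hc, hv] at this
          have hcard : (insert v (Finset.image c Finset.univ)).card = d + 1 := by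
            rw [Finset.card_insert_of_notMem hvnot, Finset.card_image_of_injective _ hinj,
              Finset.card_univ, Fintype.card_fin]
          have h4 := Finset.card_le_card hsub
          have h5 := hbag (TDAux.rtop D v)
          omega
        · push_neg at hall
          obtain ⟨a, ha⟩ := hall
          have hadj : (fullDAryTree d Δ).Adj v (c a) := by
            rw [fullDAryTree, SimpleGraph.fromRel_adj]
            simp only [hv, hc]
            constructor
            · intro h
              have h' := congrArg (fun x => (x.1 : ℕ)) h
              simp at h'
            · left
              refine ⟨trivial, fun j => ?_⟩
              have hcl : (Fin.castLE (Nat.le_succ i) j) = Fin.castSucc j := rfl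
              rw [hcl]; exact Fin.snoc_castSucc (n := i) (α := fun _ => Fin d) (p := f) (x := a) (i := j)
          rcases TDAux.child_dichotomy D hadj with h | h
          · exact absurd h ha
          · have hgoal : (⟨⟨i + 1, hi⟩, Fin.snoc f a⟩ : Σ k : Fin Δ, Fin (k : ℕ) → Fin d) = c a := by
              rw [hc]
            exact ⟨Fin.snoc f a, by rw [hgoal]; omega⟩
    have h1 : Δ - 1 < Δ := by omega
    obtain ⟨f, hf⟩ := main (Δ - 1) h1
    obtain ⟨k, hk, hk2⟩ := hH (TDAux.rtop D ⟨⟨Δ - 1, h1⟩, f⟩)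
    have := TDAux.depth_le D hk2
    omega
  have hwidth : d - 1 ≤ D.width := by
    have : D.width = (Finset.univ.sup fun t => (D.bag t).card) - 1 := rfl
    omega
  exact_mod_cast hwidth
end
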